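/- arXiv:1901.05595 — 2 statements merged into one kernel-verified Lean document; each statement's English description precedes it below -/
import Mathlib

section
/- Let R be a symmetric idempotent n×n matrix with rank n − p, let ν_4 ≥ −2, and suppose either ν_4 ≠ −2 or limsup_{n→∞} tr(R∘R)/(n−p) < 1. If p/n → c ∈ [0,1), then Var(γ_0) = σ⁴(ν_4 tr(R∘R) + 2(n−p)) is bounded below and above by positive constant multiples of n for all large n. -/
open Matrix Filter

lemma trace_eq_rank_aux {n : ℕ} (A : Matrix (Fin n) (Fin n) ℝ) (h : A * A = A) :
    A.trace = (A.rank : ℝ) := by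
  set f := A.mulVecLin with hf
  have hff : f ∘ₗ f = f := by rw [hf, ← Matrix.mulVecLin_mul, h]
  have hproj : LinearMap.IsProj (LinearMap.range f) f := by
    refine ⟨fun x => LinearMap.mem_range_self f x, ?_⟩
    rintro x ⟨y, rfl⟩
    exact congrFun (congrArg DFunLike.coe hff) y
  have htr : LinearMap.trace ℝ (Fin n → ℝ) f = (Module.finrank ℝ (LinearMap.range f) : ℝ) :=
    hproj.trace
  have h2 : LinearMap.trace ℝ (Fin n → ℝ) f = A.trace := by
    rw [LinearMap.trace_eq_matrix_trace ℝ (Pi.basisFun ℝ (Fin n))]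
    congr 1
    ext i j
    simp [LinearMap.toMatrix_apply, hf, Matrix.mulVecLin_apply, Matrix.mulVec, dotProduct, Pi.single_apply]
  rw [← h2, htr]
  rfl

lemma diag_sq_le_aux {n : ℕ} (A : Matrix (Fin n) (Fin n) ℝ) (hs : A.IsSymm)
    (h : A * A = A) (i : Fin n) : 0 ≤ A i i ∧ (A i i) ^ 2 ≤ A i i := by
  have hii : A i i = ∑ j, (A i j) ^ 2 := by
    conv_lhs => rw [← h]
    rw [Matrix.mul_apply]
    refine Finset.sum_congr rfl fun j _ => ?_
    rw [sq, hs.apply i j]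
  constructor
  · rw [hii]; positivity
  · have : (A i i) ^ 2 ≤ ∑ j, (A i j) ^ 2 :=
      Finset.single_le_sum (f := fun j => (A i j) ^ 2) (fun j _ => sq_nonneg _)
        (Finset.mem_univ i)
    rw [← hii] at this; exact this

/-- If R_n is symmetric idempotent of rank n − p_n, ν₄ ≥ −2 with ν₄ ≠ −2 or
limsup tr(R∘R)/(n−p) < 1, and p/n → c ∈ [0,1), then
Var(γ₀) = σ⁴(ν₄ tr(R∘R) + 2(n−p)) is of exact order n. -/
theorem stmt7 (p : ℕ → ℕ) (R : (n : ℕ) → Matrix (Fin n) (Fin n) ℝ)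
    (ν4 σ c : ℝ) (hσ : 0 < σ) (hν : -2 ≤ ν4)
    (hsymm : ∀ n, (R n).IsSymm) (hidem : ∀ n, R n * R n = R n)
    (hrank : ∀ n, (R n).rank = n - p n) (hpn : ∀ n, p n ≤ n)
    (hcase : ν4 ≠ -2 ∨
      Filter.limsup (fun n => (∑ i, (R n i i) ^ 2) / ((n : ℝ) - p n)) atTop < 1)
    (hc0 : 0 ≤ c) (hc1 : c < 1)
    (hratio : Tendsto (fun n => (p n : ℝ) / (n : ℝ)) atTop (nhds c)) :
    ∃ c₁ c₂ : ℝ, 0 < c₁ ∧ 0 < c₂ ∧ ∀ᶠ (n : ℕ) in atTop,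
      c₁ * (n : ℝ) ≤ σ ^ 4 * (ν4 * (∑ i, (R n i i) ^ 2) + 2 * ((n : ℝ) - p n)) ∧
      σ ^ 4 * (ν4 * (∑ i, (R n i i) ^ 2) + 2 * ((n : ℝ) - p n)) ≤ c₂ * (n : ℝ) := by
  set T : ℕ → ℝ := fun n => ∑ i, (R n i i) ^ 2 with hTdef
  set q : ℕ → ℝ := fun n => (n : ℝ) - p n with hqdef
  clear_value T q
  have hσ4 : (0:ℝ) < σ ^ 4 := by positivity
  -- basic per-n facts
  have hq_eq : ∀ n, q n = ((n - p n : ℕ) : ℝ) := by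
    intro n; simp [hqdef, Nat.cast_sub (hpn n)]
  have hq0 : ∀ n, 0 ≤ q n := fun n => by rw [hq_eq n]; positivity
  have hqn : ∀ n, q n ≤ (n : ℝ) := fun n => by
    rw [hqdef]; have : (0:ℝ) ≤ (p n : ℝ) := by positivity
    simp only; linarith
  have hT0 : ∀ n, 0 ≤ T n := by
    intro n; rw [hTdef]
    exact Finset.sum_nonneg fun i _ => sq_nonneg _
  have hTq : ∀ n, T n ≤ q n := by
    intro n
    have htr : (R n).trace = q n := by
      rw [trace_eq_rank_aux (R n) (hidem n), hrank n, hq_eq n]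
    rw [hTdef]
    calc ∑ i, (R n i i) ^ 2 ≤ ∑ i, R n i i :=
          Finset.sum_le_sum fun i _ => (diag_sq_le_aux (R n) (hsymm n) (hidem n) i).2
      _ = (R n).trace := rfl
      _ = q n := htr
  -- eventually q n ≥ (1-c)/2 * n
  have hqlow : ∀ᶠ n : ℕ in atTop, (1 - c) / 2 * (n : ℝ) ≤ q n := by
    have h1 : ∀ᶠ n in atTop, (p n : ℝ) / n < (1 + c) / 2 :=
      hratio.eventually_lt_const (by linarith)
    filter_upwards [h1, eventually_ge_atTop 1] with n hn hn1
    have hnpos : (0:ℝ) < n := by exact_mod_cast hn1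
    have : (p n : ℝ) < (1 + c) / 2 * n := by
      rwa [div_lt_iff₀ hnpos] at hn
    rw [hqdef]; simp only; linarith
  -- upper bound (always)
  have hupper : ∀ n, σ ^ 4 * (ν4 * T n + 2 * q n) ≤ σ ^ 4 * (|ν4| + 2) * n := by
    intro n
    have h1 : ν4 * T n ≤ |ν4| * q n := by
      calc ν4 * T n ≤ |ν4| * T n :=
            mul_le_mul_of_nonneg_right (le_abs_self ν4) (hT0 n)
        _ ≤ |ν4| * q n := mul_le_mul_of_nonneg_left (hTq n) (abs_nonneg _)
    have h2 : ν4 * T n + 2 * q n ≤ (|ν4| + 2) * n := by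
      nlinarith [abs_nonneg ν4, hqn n, h1]
    calc σ ^ 4 * (ν4 * T n + 2 * q n) ≤ σ ^ 4 * ((|ν4| + 2) * n) :=
          mul_le_mul_of_nonneg_left h2 (le_of_lt hσ4)
      _ = σ ^ 4 * (|ν4| + 2) * n := by ring
  -- lower bound, by cases
  have hlower : ∃ a : ℝ, 0 < a ∧ ∀ᶠ n : ℕ in atTop, a * (n : ℝ) ≤ ν4 * T n + 2 * q n := by
    rcases hcase with hne | hlim
    · -- ν4 ≠ -2
      refine ⟨(2 + min ν4 0) * ((1 - c) / 2), ?_, ?_⟩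
      · have : -2 < min ν4 0 := by
          rcases min_cases ν4 0 with ⟨h, _⟩ | ⟨h, _⟩
          · rw [h]; rcases lt_or_eq_of_le hν with h' | h'
            · exact h'
            · exact absurd h'.symm hne
          · rw [h]; norm_num
        nlinarith [hc1]
      · filter_upwards [hqlow] with n hn
        have hmin : min ν4 0 * q n ≤ ν4 * T n := by
          rcases le_or_gt 0 ν4 with h | h
          · have : min ν4 0 ≤ 0 := min_le_right _ _
            nlinarith [hq0 n, hT0 n]
          · have : min ν4 0 = ν4 := min_eq_left h.le
            rw [this]
            exact mul_le_mul_of_nonpos_left (hTq n) h.le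
        have h2 : (2 + min ν4 0) * ((1 - c) / 2 * n) ≤ (2 + min ν4 0) * q n := by
          apply mul_le_mul_of_nonneg_left hn
          have : -2 ≤ min ν4 0 := le_min hν (by norm_num)
          linarith
        calc (2 + min ν4 0) * ((1 - c) / 2) * n
            = (2 + min ν4 0) * ((1 - c) / 2 * n) := by ring
          _ ≤ (2 + min ν4 0) * q n := h2
          _ = 2 * q n + min ν4 0 * q n := by ring
          _ ≤ 2 * q n + ν4 * T n := by linarith
          _ = ν4 * T n + 2 * q n := by ring
    · -- ν4 = -2 case impossible to distinguish: hlim holds; but ν4 may be anything ≥ -2.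
      -- Use L a margin below 1.
      set f : ℕ → ℝ := fun n => T n / q n with hfdef
      have hlim' : limsup f atTop < 1 := by
        have hfe : f = fun n => (∑ i, (R n i i) ^ 2) / ((n : ℝ) - p n) := by
          rw [hfdef, hTdef, hqdef]
        rw [hfe]; exact hlim
      set L : ℝ := max ((limsup f atTop + 1) / 2) (1 / 2) with hLdef
      have hL1 : L < 1 := by
        rw [hLdef]; apply max_lt
        · linarith [hlim']
        · norm_num
      have hLlim : limsup f atTop < L := by
        calc limsup f atTop < (limsup f atTop + 1) / 2 := by linarith [hlim']
          _ ≤ L := le_max_left _ _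
      have hbdd : IsBoundedUnder (· ≤ ·) atTop f := by
        refine isBoundedUnder_of ⟨1, fun n => ?_⟩
        rcases eq_or_lt_of_le (hq0 n) with h | h
        · simp only [hfdef]
          have hT : T n = 0 := le_antisymm (h ▸ hTq n) (hT0 n)
          simp [hT]
        · simp only [hfdef]
          rw [div_le_one h]
          exact hTq n
      have hev : ∀ᶠ n : ℕ in atTop, f n < L := eventually_lt_of_limsup_lt hLlim hbdd
      refine ⟨(2 * (1 - L)) * ((1 - c) / 2), ?_, ?_⟩
      · have hL0 : 0 < 1 - L := by linarith
        nlinarith [hc1]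
      · filter_upwards [hqlow, hev, eventually_ge_atTop 1] with n hn hfn hn1
        have hnpos : (0:ℝ) < n := by exact_mod_cast hn1
        have hqpos : 0 < q n := by
          have h0 : 0 < (1 - c) / 2 * n := by
            apply mul_pos _ hnpos; linarith
          exact lt_of_lt_of_le h0 hn
        have hTL : T n < L * q n := by
          rwa [hfdef, div_lt_iff₀ hqpos] at hfn
        have h3 : ν4 * T n + 2 * q n ≥ 2 * (1 - L) * q n := by
          have hνT : ν4 * T n ≥ -2 * T n :=
            mul_le_mul_of_nonneg_right hν (hT0 n)
          nlinarith
        have h4 : 2 * (1 - L) * ((1 - c) / 2 * n) ≤ 2 * (1 - L) * q n := by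
          apply mul_le_mul_of_nonneg_left hn
          have : L < 1 := hL1; linarith
        calc 2 * (1 - L) * ((1 - c) / 2) * n
            = 2 * (1 - L) * ((1 - c) / 2 * n) := by ring
          _ ≤ 2 * (1 - L) * q n := h4
          _ ≤ ν4 * T n + 2 * q n := h3
  obtain ⟨a, ha, hev⟩ := hlower
  refine ⟨σ ^ 4 * a, σ ^ 4 * (|ν4| + 2), by positivity, by positivity, ?_⟩
  filter_upwards [hev] with n hn
  have e1 : (∑ i, (R n i i) ^ 2) = T n := by rw [hTdef]
  have e2 : ((n : ℝ) - p n) = q n := by rw [hqdef]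
  rw [e1, e2]
  constructor
  · calc σ ^ 4 * a * n = σ ^ 4 * (a * n) := by ring
      _ ≤ σ ^ 4 * (ν4 * T n + 2 * q n) := mul_le_mul_of_nonneg_left hn (le_of_lt hσ4)
  · exact hupper n
end

section
/- Let ε_1,...,ε_n be independent with mean 0, variance σ², and common standardized fourth moment M_4, let R = (r_{ij}) be the residual maker matrix, and let e = Rε. Then E[Σ_{i=1}^n e_i⁴] = 3σ⁴ tr(R ∘ R) + ν_4 σ⁴ Σ_{i,j} r_{ij}⁴, where ν_4 = M_4 − 3. -/
open MeasureTheory ProbabilityTheory Matrix Finset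
open scoped ENNReal

section Aux

variable {Ω : Type*} [MeasureSpace Ω] [IsProbabilityMeasure (ℙ : Measure Ω)]

lemma aux_int4_of_memLp4 {f : Ω → ℝ} (hf : MemLp f 4 ℙ) :
    Integrable (fun ω => f ω ^ 4) ℙ := by
  have h := hf.integrable_norm_rpow (by norm_num) (by norm_num)
  convert h using 1
  funext ω
  rw [Real.norm_eq_abs]
  rw [show ((4:ℝ≥0∞).toReal) = ((4:ℕ):ℝ) by norm_num, Real.rpow_natCast, ← abs_pow,
    abs_of_nonneg (by positivity)]

lemma aux_int_pow {f : Ω → ℝ} (hm : Measurable f) (hf : MemLp f 4 ℙ) {k : ℕ} (hk : k ≤ 4) :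
    Integrable (fun ω => f ω ^ k) ℙ := by
  have h4 := aux_int4_of_memLp4 hf
  refine (h4.add (integrable_const 1)).mono' (hm.pow_const k).aestronglyMeasurable ?_
  filter_upwards with ω
  have h0 : (0:ℝ) ≤ f ω ^ 4 := by positivity
  simp only [Pi.add_apply, Real.norm_eq_abs, abs_pow]
  rcases le_total (|f ω|) 1 with h | h
  · have : |f ω| ^ k ≤ 1 := pow_le_one₀ (abs_nonneg _) h
    linarith
  · have h1 : |f ω| ^ k ≤ |f ω| ^ 4 := pow_le_pow_right₀ h hk
    have h2 : |f ω| ^ 4 = f ω ^ 4 := by rw [← abs_pow]; exact abs_of_nonneg h0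
    linarith

lemma aux_memLp4 {f : Ω → ℝ} (hm : Measurable f)
    (h4 : Integrable (fun ω => f ω ^ 4) ℙ) : MemLp f 4 ℙ := by
  have h := (memLp_norm_rpow_iff (μ := (ℙ : Measure Ω)) (q := 4) (p := 4)
    hm.aestronglyMeasurable (by norm_num) (by norm_num))
  rw [show ((4:ℝ≥0∞)/4) = 1 from ENNReal.div_self (by norm_num) (by norm_num), memLp_one_iff_integrable] at h
  apply h.mp
  convert h4 using 1
  funext ω
  rw [Real.norm_eq_abs]
  rw [show ((4:ℝ≥0∞).toReal) = ((4:ℕ):ℝ) by norm_num, Real.rpow_natCast, ← abs_pow,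
    abs_of_nonneg (by positivity)]

lemma step2 {T E : Ω → ℝ} (hTm : Measurable T) (hEm : Measurable E)
    (hT4 : MemLp T 4 ℙ) (hE4 : MemLp E 4 ℙ) (hTE : IndepFun T E ℙ)
    (hTmean : ∫ ω, T ω ∂ℙ = 0) (hEmean : ∫ ω, E ω ∂ℙ = 0) (c : ℝ) :
    ∫ ω, (c * E ω + T ω) ^ 2 ∂ℙ
      = ∫ ω, T ω ^ 2 ∂ℙ + c ^ 2 * ∫ ω, E ω ^ 2 ∂ℙ := by
  have hT1 : Integrable T ℙ := hT4.integrable (by norm_num)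
  have hE1 : Integrable E ℙ := hE4.integrable (by norm_num)
  have hT2 : Integrable (fun ω => T ω ^ 2) ℙ := aux_int_pow hTm hT4 (by norm_num)
  have hE2 : Integrable (fun ω => E ω ^ 2) ℙ := aux_int_pow hEm hE4 (by norm_num)
  have hprod : Integrable (fun ω => T ω * E ω) ℙ := hTE.integrable_mul hT1 hE1
  have hval : ∫ ω, T ω * E ω ∂ℙ = (∫ ω, T ω ∂ℙ) * ∫ ω, E ω ∂ℙ :=
    hTE.integral_fun_mul_eq_mul_integral hT1.aestronglyMeasurable hE1.aestronglyMeasurable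
  have key : ∫ ω, (c * E ω + T ω) ^ 2 ∂ℙ
      = ∫ ω, (T ω ^ 2 + ((2*c) * (T ω * E ω) + c^2 * E ω ^ 2)) ∂ℙ := by
    congr 1; funext ω; ring
  have j2 : Integrable (fun ω => (2*c) * (T ω * E ω) + c^2 * E ω ^ 2) ℙ :=
    (hprod.const_mul _).add (hE2.const_mul _)
  rw [key, integral_add hT2 j2, integral_add (hprod.const_mul _) (hE2.const_mul _),
    integral_const_mul, integral_const_mul, hval, hTmean]
  ring

lemma step4 {T E : Ω → ℝ} (hTm : Measurable T) (hEm : Measurable E)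
    (hT4 : MemLp T 4 ℙ) (hE4 : MemLp E 4 ℙ) (hTE : IndepFun T E ℙ)
    (hTmean : ∫ ω, T ω ∂ℙ = 0) (hEmean : ∫ ω, E ω ∂ℙ = 0) (c : ℝ) :
    ∫ ω, (c * E ω + T ω) ^ 4 ∂ℙ
      = ∫ ω, T ω ^ 4 ∂ℙ
        + 6 * c ^ 2 * ((∫ ω, T ω ^ 2 ∂ℙ) * ∫ ω, E ω ^ 2 ∂ℙ)
        + c ^ 4 * ∫ ω, E ω ^ 4 ∂ℙ := by
  have hTk : ∀ k, k ≤ 4 → Integrable (fun ω => T ω ^ k) ℙ :=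
    fun k hk => aux_int_pow hTm hT4 hk
  have hEk : ∀ k, k ≤ 4 → Integrable (fun ω => E ω ^ k) ℙ :=
    fun k hk => aux_int_pow hEm hE4 hk
  have hind : ∀ m l : ℕ, IndepFun (fun ω => T ω ^ m) (fun ω => E ω ^ l) ℙ :=
    fun m l => hTE.comp (measurable_id.pow_const m) (measurable_id.pow_const l)
  have hprod : ∀ m l : ℕ, m ≤ 4 → l ≤ 4 → Integrable (fun ω => T ω ^ m * E ω ^ l) ℙ :=
    fun m l hm hl => (hind m l).integrable_mul (hTk m hm) (hEk l hl)
  have hval : ∀ m l : ℕ, m ≤ 4 → l ≤ 4 →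
      ∫ ω, T ω ^ m * E ω ^ l ∂ℙ = (∫ ω, T ω ^ m ∂ℙ) * ∫ ω, E ω ^ l ∂ℙ :=
    fun m l hm hl => (hind m l).integral_fun_mul_eq_mul_integral (hTk m hm).aestronglyMeasurable (hEk l hl).aestronglyMeasurable
  have i1 := (hprod 3 1 (by norm_num) (by norm_num)).const_mul (4*c)
  have i2 := (hprod 2 2 (by norm_num) (by norm_num)).const_mul (6*c^2)
  have i3 := (hprod 1 3 (by norm_num) (by norm_num)).const_mul (4*c^3)
  have i4 := (hEk 4 le_rfl).const_mul (c^4)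
  have key : ∫ ω, (c * E ω + T ω) ^ 4 ∂ℙ
      = ∫ ω, (T ω ^ 4 + ((4*c) * (T ω ^ 3 * E ω ^ 1)
          + ((6*c^2) * (T ω ^ 2 * E ω ^ 2)
          + ((4*c^3) * (T ω ^ 1 * E ω ^ 3) + (c^4) * E ω ^ 4)))) ∂ℙ := by
    congr 1; funext ω; ring
  have i34 : Integrable (fun ω => (4*c^3) * (T ω ^ 1 * E ω ^ 3) + (c^4) * E ω ^ 4) ℙ := i3.add i4
  have i234 : Integrable (fun ω => (6*c^2) * (T ω ^ 2 * E ω ^ 2)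
      + ((4*c^3) * (T ω ^ 1 * E ω ^ 3) + (c^4) * E ω ^ 4)) ℙ := i2.add i34
  have i1234 : Integrable (fun ω => (4*c) * (T ω ^ 3 * E ω ^ 1)
      + ((6*c^2) * (T ω ^ 2 * E ω ^ 2)
      + ((4*c^3) * (T ω ^ 1 * E ω ^ 3) + (c^4) * E ω ^ 4))) ℙ := i1.add i234
  rw [key, integral_add (hTk 4 le_rfl) i1234,
    integral_add i1 i234, integral_add i2 i34, integral_add i3 i4,
    integral_const_mul, integral_const_mul, integral_const_mul, integral_const_mul,
    hval 3 1 (by norm_num) (by norm_num), hval 2 2 (by norm_num) (by norm_num),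
    hval 1 3 (by norm_num) (by norm_num)]
  simp only [pow_one, hEmean, hTmean]
  ring

variable {n : ℕ} {ε : Fin n → Ω → ℝ}

lemma indep_sum (hmeas : ∀ i, Measurable (ε i))
    (hindep : iIndepFun ε ℙ)
    (a : Fin n → ℝ) {s : Finset (Fin n)} {j : Fin n} (hj : j ∉ s) :
    IndepFun (fun ω => ∑ k ∈ s, a k * ε k ω) (ε j) ℙ := by
  classical
  set g : Fin n → Ω → ℝ := fun k ω => if k = j then ε k ω else a k * ε k ω with hg
  have hgindep : iIndepFun g ℙ := by
    have h := hindep.comp (fun k (x : ℝ) => if k = j then x else a k * x)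
      (fun k => by split <;> [exact measurable_id; exact measurable_const_mul _])
    exact h
  have hgm : ∀ k, Measurable (g k) := by
    intro k
    by_cases hkj : k = j
    · simpa [hg, hkj] using hmeas k
    · simpa [hg, hkj] using (hmeas k).const_mul (a k)
  have h := hgindep.indepFun_finsetSum_of_notMem hgm hj
  have h1 : (∑ k ∈ s, g k) = fun ω => ∑ k ∈ s, a k * ε k ω := by
    funext ω
    rw [Finset.sum_apply]
    refine Finset.sum_congr rfl fun k hk => ?_
    simp [hg, ne_of_mem_of_not_mem hk hj]
  have h2 : g j = ε j := by funext ω; simp [hg]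
  rwa [h1, h2] at h

lemma sum_memLp4 (hmeas : ∀ i, Measurable (ε i)) (hL4 : ∀ i, MemLp (ε i) 4 ℙ)
    (a : Fin n → ℝ) (s : Finset (Fin n)) :
    MemLp (fun ω => ∑ k ∈ s, a k * ε k ω) 4 ℙ := by
  have h := memLp_finset_sum' s (fun k (_ : k ∈ s) => (hL4 k).const_mul (a k))
  convert h using 1
  funext ω
  simp [Finset.sum_apply]

lemma sum_measurable (hmeas : ∀ i, Measurable (ε i)) (a : Fin n → ℝ) (s : Finset (Fin n)) :
    Measurable (fun ω => ∑ k ∈ s, a k * ε k ω) :=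
  Finset.measurable_sum s fun k _ => (hmeas k).const_mul _

lemma sum_mean (hL4 : ∀ i, MemLp (ε i) 4 ℙ) (hmean : ∀ i, ∫ ω, ε i ω ∂ℙ = 0)
    (a : Fin n → ℝ) (s : Finset (Fin n)) :
    ∫ ω, ∑ j ∈ s, a j * ε j ω ∂ℙ = 0 := by
  rw [integral_finset_sum s fun j _ => ((hL4 j).integrable (by norm_num)).const_mul (a j)]
  simp [integral_const_mul, hmean]

lemma sum_sq {σ : ℝ} (hmeas : ∀ i, Measurable (ε i))
    (hindep : iIndepFun ε ℙ)
    (hL4 : ∀ i, MemLp (ε i) 4 ℙ) (hmean : ∀ i, ∫ ω, ε i ω ∂ℙ = 0)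
    (hvar : ∀ i, ∫ ω, (ε i ω) ^ 2 ∂ℙ = σ ^ 2)
    (a : Fin n → ℝ) (s : Finset (Fin n)) :
    ∫ ω, (∑ j ∈ s, a j * ε j ω) ^ 2 ∂ℙ = σ ^ 2 * ∑ j ∈ s, (a j) ^ 2 := by
  classical
  induction s using Finset.induction_on with
  | empty => simp
  | insert _ _ hj =>
    rename_i j s ih
    simp only [Finset.sum_insert hj]
    rw [step2 (sum_measurable hmeas a s) (hmeas j) (sum_memLp4 hmeas hL4 a s) (hL4 j)
      (indep_sum hmeas hindep a hj) (sum_mean hL4 hmean a s) (hmean j) (a j), ih, hvar j]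
    ring

lemma sum_fourth {σ μ4 : ℝ} (hmeas : ∀ i, Measurable (ε i))
    (hindep : iIndepFun ε ℙ)
    (hL4 : ∀ i, MemLp (ε i) 4 ℙ) (hmean : ∀ i, ∫ ω, ε i ω ∂ℙ = 0)
    (hvar : ∀ i, ∫ ω, (ε i ω) ^ 2 ∂ℙ = σ ^ 2)
    (h4mom : ∀ i, ∫ ω, (ε i ω) ^ 4 ∂ℙ = μ4)
    (a : Fin n → ℝ) (s : Finset (Fin n)) :
    ∫ ω, (∑ j ∈ s, a j * ε j ω) ^ 4 ∂ℙ
      = μ4 * ∑ j ∈ s, (a j) ^ 4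
        + 3 * σ ^ 4 * ((∑ j ∈ s, (a j) ^ 2) ^ 2 - ∑ j ∈ s, (a j) ^ 4) := by
  classical
  induction s using Finset.induction_on with
  | empty => simp
  | insert _ _ hj =>
    rename_i j s ih
    simp only [Finset.sum_insert hj]
    rw [step4 (sum_measurable hmeas a s) (hmeas j) (sum_memLp4 hmeas hL4 a s) (hL4 j)
      (indep_sum hmeas hindep a hj) (sum_mean hL4 hmean a s) (hmean j) (a j), ih,
      sum_sq hmeas hindep hL4 hmean hvar a s, hvar j, h4mom j]
    ring

end Aux

/-- For e = Rε with R the residual maker matrix and independent errors with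
variance σ² and standardized fourth moment M₄:
E[Σ_i e_i⁴] = 3σ⁴ tr(R∘R) + ν₄σ⁴ Σ_{i,j} r_{ij}⁴, with ν₄ = M₄ − 3. -/
theorem stmt9 {Ω : Type*} [MeasureSpace Ω] [IsProbabilityMeasure (ℙ : Measure Ω)]
    {n p : ℕ} (X : Matrix (Fin n) (Fin p) ℝ) (ε : Fin n → Ω → ℝ) (σ M4 : ℝ)
    (hσ : 0 < σ) (hX : IsUnit (Xᵀ * X))
    (R : Matrix (Fin n) (Fin n) ℝ) (hR : R = 1 - X * (Xᵀ * X)⁻¹ * Xᵀ)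
    (hmeas : ∀ i, Measurable (ε i))
    (hindep : iIndepFun ε ℙ)
    (hmean : ∀ i, ∫ ω, ε i ω ∂ℙ = 0)
    (hvar : ∀ i, ∫ ω, (ε i ω) ^ 2 ∂ℙ = σ ^ 2)
    (hM4int : ∀ i, Integrable (fun ω => (ε i ω) ^ 4) ℙ)
    (hM4 : ∀ i, ∫ ω, (ε i ω / σ) ^ 4 ∂ℙ = M4)
    (e : Ω → Fin n → ℝ) (he : ∀ ω, e ω = R.mulVec (fun i => ε i ω)) :
    ∫ ω, ∑ i, (e ω i) ^ 4 ∂ℙ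
      = 3 * σ ^ 4 * (∑ i, (R i i) ^ 2)
        + (M4 - 3) * σ ^ 4 * ∑ i, ∑ j, (R i j) ^ 4 := by
  have hσ4 : σ ^ 4 ≠ 0 := by positivity
  -- L4 membership
  have hL4 : ∀ i, MemLp (ε i) 4 ℙ := fun i => aux_memLp4 (hmeas i) (hM4int i)
  -- fourth moment value
  have h4mom : ∀ i, ∫ ω, (ε i ω) ^ 4 ∂ℙ = M4 * σ ^ 4 := by
    intro i
    have h := hM4 i
    simp only [div_pow] at h
    rw [integral_div] at h
    rw [div_eq_iff hσ4] at h
    exact h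
  -- matrix facts
  have hdet : IsUnit (Xᵀ * X).det := (Matrix.isUnit_iff_isUnit_det _).mp hX
  have hinv : (Xᵀ * X)⁻¹ * (Xᵀ * X) = 1 := Matrix.nonsing_inv_mul _ hdet
  have hPP : (X * (Xᵀ * X)⁻¹ * Xᵀ) * (X * (Xᵀ * X)⁻¹ * Xᵀ) = X * (Xᵀ * X)⁻¹ * Xᵀ := by
    calc (X * (Xᵀ * X)⁻¹ * Xᵀ) * (X * (Xᵀ * X)⁻¹ * Xᵀ)
        = X * ((Xᵀ * X)⁻¹ * (Xᵀ * X)) * ((Xᵀ * X)⁻¹ * Xᵀ) := by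
          simp only [Matrix.mul_assoc]
      _ = X * (Xᵀ * X)⁻¹ * Xᵀ := by rw [hinv, Matrix.mul_one, Matrix.mul_assoc]
  have hRR : R * R = R := by
    rw [hR, sub_mul, mul_sub, mul_sub, hPP]; simp only [one_mul, mul_one]
    abel
  have hRT : Rᵀ = R := by
    rw [hR]
    simp only [Matrix.transpose_sub, Matrix.transpose_one, Matrix.transpose_mul,
      Matrix.transpose_transpose, Matrix.transpose_nonsing_inv, Matrix.mul_assoc]
  have hsym : ∀ i j, R j i = R i j := fun i j => by
    conv_lhs => rw [← hRT]
    rfl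
  have hdiag : ∀ i, ∑ j, (R i j) ^ 2 = R i i := by
    intro i
    calc ∑ j, (R i j) ^ 2 = ∑ j, R i j * R j i := by
          refine Finset.sum_congr rfl fun j _ => ?_
          rw [sq, hsym i j]
      _ = (R * R) i i := by rw [Matrix.mul_apply]
      _ = R i i := by rw [hRR]
  -- rewrite e
  have hei : ∀ ω i, e ω i = ∑ j, R i j * ε j ω := by
    intro ω i
    rw [he ω]
    simp [Matrix.mulVec, dotProduct]
  have hint : ∀ i : Fin n, Integrable (fun ω => (∑ j, R i j * ε j ω) ^ 4) ℙ :=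
    fun i => aux_int_pow (sum_measurable hmeas (R i) Finset.univ)
      (sum_memLp4 hmeas hL4 (R i) Finset.univ) le_rfl
  have hmain : ∫ ω, ∑ i, (e ω i) ^ 4 ∂ℙ
      = ∑ i, ∫ ω, (∑ j, R i j * ε j ω) ^ 4 ∂ℙ := by
    rw [show (fun ω => ∑ i, (e ω i) ^ 4) = fun ω => ∑ i, (∑ j, R i j * ε j ω) ^ 4 by
      funext ω; exact Finset.sum_congr rfl fun i _ => by rw [hei ω i]]
    exact integral_finset_sum _ fun i _ => hint i
  rw [hmain]
  have hterm : ∀ i : Fin n, ∫ ω, (∑ j, R i j * ε j ω) ^ 4 ∂ℙ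
      = 3 * σ ^ 4 * (R i i) ^ 2 + (M4 - 3) * σ ^ 4 * ∑ j, (R i j) ^ 4 := by
    intro i
    rw [sum_fourth hmeas hindep hL4 hmean hvar h4mom (R i) Finset.univ, hdiag i]
    ring
  rw [Finset.sum_congr rfl fun i _ => hterm i, Finset.sum_add_distrib, ← Finset.mul_sum,
    ← Finset.mul_sum]
end
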